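/- Let α ∈ (0,1), T > 0, b > 0, m ∈ ℕ, and let s : [0,T] → ℝ be absolutely continuous with s(0) = b and ṡ ≥ 0 a.e. Then there exists a constant c₀ depending only on m, b, α, ‖t^{1−α} ṡ‖_{C([0,T])} and T such that for almost every 0 ≤ τ ≤ t ≤ T and all 0 ≤ t₁ ≤ t₂ ≤ T with τ ≤ t₁: (i) |B(τ,t)| ≤ c₀ [s(t) − s(τ)]; (ii) |B_τ(τ,t)| ≤ c₀ ṡ(τ); (iii) |B_t(τ,t)| ≤ c₀ ṡ(t); (iv) |B(τ,t₂) − B(τ,t₁)| ≤ c₀ |s(t₂) − s(t₁)|; (v) |D̃(τ,t)| ≤ c₀ ṡ(τ) [s(t) − s(τ)]; (vi) |D̃_t(τ,t)| ≤ c₀ ṡ(τ) ṡ(t); (vii) |E′(t)| ≤ c₀ ṡ(t). -/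

import Mathlib

open MeasureTheory Set Filter
open scoped Topology

/-- Eigenvalues `λ_n(t) = (π / s(t)) (n + 1/2)`. -/
noncomputable def lam (s : ℝ → ℝ) (n : ℕ) (t : ℝ) : ℝ :=
  Real.pi / s t * (n + 1 / 2)

/-- Eigenfunctions `φ_n(x,t) = √(2/s(t)) cos(λ_n(t) x)`. -/
noncomputable def phi (s : ℝ → ℝ) (n : ℕ) (x t : ℝ) : ℝ :=
  Real.sqrt (2 / s t) * Real.cos (lam s n t * x)

/-- `B(τ,t)_{n,k} = ∫₀^{s(τ)} φ_n(x,τ)[φ_k(x,t) − φ_k(x,τ)] dx`. -/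
noncomputable def Bmat (s : ℝ → ℝ) (m : ℕ) (τ t : ℝ) :
    Matrix (Fin (m + 1)) (Fin (m + 1)) ℝ :=
  Matrix.of fun n k : Fin (m + 1) =>
    ∫ x in (0:ℝ)..(s τ), phi s n x τ * (phi s k x t - phi s k x τ)

/-- `D̃(τ,t)_{n,k} = ∫₀^{s(τ)} ∂_τ φ_n(x,τ)[φ_k(x,t) − φ_k(x,τ)] dx`. -/
noncomputable def Dtil (s : ℝ → ℝ) (m : ℕ) (τ t : ℝ) :
    Matrix (Fin (m + 1)) (Fin (m + 1)) ℝ :=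
  Matrix.of fun n k : Fin (m + 1) =>
    ∫ x in (0:ℝ)..(s τ), deriv (fun r => phi s n x r) τ * (phi s k x t - phi s k x τ)

/-- `E(t)_{n,k} = λ_k(t)² δ_{n,k}/Γ(1−α)`. -/
noncomputable def Emat (α : ℝ) (s : ℝ → ℝ) (m : ℕ) (t : ℝ) :
    Matrix (Fin (m + 1)) (Fin (m + 1)) ℝ :=
  Matrix.of fun n k : Fin (m + 1) =>
    if n = k then lam s k t ^ 2 / Real.Gamma (1 - α) else 0

open MeasureTheory Set Filter intervalIntegral
open scoped Topology Real

noncomputable def PP (z : ℝ) : ℝ := ∫ y in (0:ℝ)..1, Real.cos (z * y)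
noncomputable def QQ (z : ℝ) : ℝ := ∫ y in (0:ℝ)..1, Real.sin (z * y) * y
noncomputable def RR (z : ℝ) : ℝ := ∫ y in (0:ℝ)..1, Real.cos (z * y) * y * y

lemma abs_PP (z : ℝ) : |PP z| ≤ 1 := by
  have := intervalIntegral.norm_integral_le_of_norm_le_const
    (C := 1) (f := fun y => Real.cos (z * y)) (a := (0:ℝ)) (b := 1)
    (fun y _ => by simpa [Real.norm_eq_abs] using Real.abs_cos_le_one (z * y))
  simpa [Real.norm_eq_abs, PP] using this

lemma abs_QQ (z : ℝ) : |QQ z| ≤ 1 := by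
  have := intervalIntegral.norm_integral_le_of_norm_le_const
    (C := 1) (f := fun y => Real.sin (z * y) * y) (a := (0:ℝ)) (b := 1)
    (fun y hy => by
      have hy' : y ∈ Set.Ioc (0:ℝ) 1 := by simpa [Set.uIoc_of_le, zero_le_one] using hy
      have h1 : |Real.sin (z*y)| ≤ 1 := Real.abs_sin_le_one _
      have h2 : |y| ≤ 1 := by rw [abs_of_pos hy'.1]; exact hy'.2
      calc ‖Real.sin (z*y) * y‖ = |Real.sin (z*y)| * |y| := by rw [Real.norm_eq_abs, abs_mul]
        _ ≤ 1 * 1 := by gcongr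
        _ = 1 := by ring)
  simpa [Real.norm_eq_abs, QQ] using this

lemma abs_RR (z : ℝ) : |RR z| ≤ 1 := by
  have := intervalIntegral.norm_integral_le_of_norm_le_const
    (C := 1) (f := fun y => Real.cos (z * y) * y * y) (a := (0:ℝ)) (b := 1)
    (fun y hy => by
      have hy' : y ∈ Set.Ioc (0:ℝ) 1 := by simpa [Set.uIoc_of_le, zero_le_one] using hy
      have h1 : |Real.cos (z*y)| ≤ 1 := Real.abs_cos_le_one _
      have h2 : |y| ≤ 1 := by rw [abs_of_pos hy'.1]; exact hy'.2
      calc ‖Real.cos (z*y) * y * y‖ = |Real.cos (z*y)| * |y| * |y| := by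
            rw [Real.norm_eq_abs, abs_mul, abs_mul]
        _ ≤ 1 * 1 * 1 := by gcongr
        _ = 1 := by ring)
  simpa [Real.norm_eq_abs, RR] using this

lemma hasDerivAt_PP (z : ℝ) : HasDerivAt PP (-QQ z) z := by
  have h := intervalIntegral.hasDerivAt_integral_of_dominated_loc_of_deriv_le
    (F := fun x y => Real.cos (x * y)) (F' := fun x y => -(Real.sin (x * y) * y))
    (x₀ := z) (a := (0:ℝ)) (b := 1) (μ := volume) (bound := fun _ => 1)
    Filter.univ_mem
    (Filter.Eventually.of_forall fun x =>
      (Real.continuous_cos.comp (continuous_const.mul continuous_id)).aestronglyMeasurable)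
    ((Real.continuous_cos.comp (continuous_const.mul continuous_id)).intervalIntegrable 0 1)
    ((Real.continuous_sin.comp (continuous_const.mul continuous_id)).mul
      continuous_id).neg.aestronglyMeasurable
    (Filter.Eventually.of_forall fun y hy x _ => by
      have hy' : y ∈ Set.Ioc (0:ℝ) 1 := by simpa [Set.uIoc_of_le, zero_le_one] using hy
      have h2 : |y| ≤ 1 := by rw [abs_of_pos hy'.1]; exact hy'.2
      calc ‖-(Real.sin (x*y) * y)‖ = |Real.sin (x*y)| * |y| := by
            rw [Real.norm_eq_abs, abs_neg, abs_mul]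
        _ ≤ 1 * 1 := by gcongr; exact Real.abs_sin_le_one _
        _ = 1 := by ring)
    (intervalIntegrable_const)
    (Filter.Eventually.of_forall fun y hy x _ => by
      have : HasDerivAt (fun x : ℝ => x * y) y x := hasDerivAt_mul_const y
      simpa [mul_comm, Function.comp_def] using (Real.hasDerivAt_cos (x*y)).comp x this)
  have h2 := h.2
  rwa [show (∫ y in (0:ℝ)..1, -(Real.sin (z*y) * y)) = -QQ z by
    rw [intervalIntegral.integral_neg]; rfl] at h2

lemma hasDerivAt_QQ (z : ℝ) : HasDerivAt QQ (RR z) z := by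
  have h := intervalIntegral.hasDerivAt_integral_of_dominated_loc_of_deriv_le
    (F := fun x y => Real.sin (x * y) * y) (F' := fun x y => Real.cos (x * y) * y * y)
    (x₀ := z) (a := (0:ℝ)) (b := 1) (μ := volume) (bound := fun _ => 1)
    Filter.univ_mem
    (Filter.Eventually.of_forall fun x =>
      ((Real.continuous_sin.comp (continuous_const.mul continuous_id)).mul
        continuous_id).aestronglyMeasurable)
    (((Real.continuous_sin.comp (continuous_const.mul continuous_id)).mul
        continuous_id).intervalIntegrable 0 1)
    (((Real.continuous_cos.comp (continuous_const.mul continuous_id)).mul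
        continuous_id).mul continuous_id).aestronglyMeasurable
    (Filter.Eventually.of_forall fun y hy x _ => by
      have hy' : y ∈ Set.Ioc (0:ℝ) 1 := by simpa [Set.uIoc_of_le, zero_le_one] using hy
      have h2 : |y| ≤ 1 := by rw [abs_of_pos hy'.1]; exact hy'.2
      calc ‖Real.cos (x*y) * y * y‖ = |Real.cos (x*y)| * |y| * |y| := by
            rw [Real.norm_eq_abs, abs_mul, abs_mul]
        _ ≤ 1 * 1 * 1 := by gcongr; exact Real.abs_cos_le_one _
        _ = 1 := by ring)
    (intervalIntegrable_const)
    (Filter.Eventually.of_forall fun y hy x _ => by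
      have h1 : HasDerivAt (fun x : ℝ => x * y) y x := hasDerivAt_mul_const y
      have := ((Real.hasDerivAt_sin (x*y)).comp x h1).mul_const y
      simpa [mul_comm, mul_assoc, mul_left_comm] using this)
  exact h.2

lemma cc_int (μ ν : ℝ) :
    ∫ y in (0:ℝ)..1, Real.cos (μ*y) * Real.cos (ν*y) = (PP (μ-ν) + PP (μ+ν))/2 := by
  have key : ∀ y ∈ Set.uIcc (0:ℝ) 1, Real.cos (μ*y) * Real.cos (ν*y)
      = (Real.cos ((μ-ν)*y) + Real.cos ((μ+ν)*y))/2 := fun y _ => by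
    rw [sub_mul, add_mul, Real.cos_sub, Real.cos_add]; ring
  have i1 : IntervalIntegrable (fun y:ℝ => Real.cos ((μ-ν)*y)) volume 0 1 :=
    Continuous.intervalIntegrable (by fun_prop) 0 1
  have i2 : IntervalIntegrable (fun y:ℝ => Real.cos ((μ+ν)*y)) volume 0 1 :=
    Continuous.intervalIntegrable (by fun_prop) 0 1
  rw [intervalIntegral.integral_congr key, intervalIntegral.integral_div,
    intervalIntegral.integral_add i1 i2]
  rfl

lemma sc_int (μ ν : ℝ) :
    ∫ y in (0:ℝ)..1, (Real.sin (μ*y) * y) * Real.cos (ν*y) = (QQ (μ-ν) + QQ (μ+ν))/2 := by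
  have key : ∀ y ∈ Set.uIcc (0:ℝ) 1, (Real.sin (μ*y) * y) * Real.cos (ν*y)
      = (Real.sin ((μ-ν)*y) * y + Real.sin ((μ+ν)*y) * y)/2 := fun y _ => by
    rw [sub_mul, add_mul, Real.sin_sub, Real.sin_add]; ring
  have i1 : IntervalIntegrable (fun y:ℝ => Real.sin ((μ-ν)*y) * y) volume 0 1 :=
    Continuous.intervalIntegrable (by fun_prop) 0 1
  have i2 : IntervalIntegrable (fun y:ℝ => Real.sin ((μ+ν)*y) * y) volume 0 1 :=
    Continuous.intervalIntegrable (by fun_prop) 0 1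
  rw [intervalIntegral.integral_congr key, intervalIntegral.integral_div,
    intervalIntegral.integral_add i1 i2]
  rfl

lemma scale_int (c : ℝ) (hc : 0 < c) (f : ℝ → ℝ) :
    ∫ x in (0:ℝ)..c, f x = c * ∫ y in (0:ℝ)..1, f (c*y) := by
  have h := intervalIntegral.smul_integral_comp_mul_left (a := (0:ℝ)) (b := 1) f c
  rw [mul_zero, mul_one] at h
  rw [← h, smul_eq_mul]

noncomputable def muu (j : ℕ) : ℝ := Real.pi * (j + 1/2)

lemma muu_pos (j : ℕ) : 0 < muu j := by
  have := Real.pi_pos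
  have : (0:ℝ) < (j:ℝ) + 1/2 := by positivity
  unfold muu; positivity

noncomputable def psi (j : ℕ) (x c : ℝ) : ℝ :=
  Real.sqrt (2/c) * Real.cos (Real.pi / c * (j + 1/2) * x)

lemma cont_psi (j : ℕ) (c : ℝ) : Continuous (fun x => psi j x c) := by
  unfold psi
  exact continuous_const.mul (Real.continuous_cos.comp (continuous_const.mul continuous_id))

lemma psi_scaled (j : ℕ) {c C : ℝ} (hc : c ≠ 0) (y : ℝ) :
    psi j (c*y) C = Real.sqrt (2/C) * Real.cos ((muu j * c / C) * y) := by
  unfold psi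
  congr 2
  unfold muu; ring

lemma int_psi_mul (n k : ℕ) {c C : ℝ} (hc : 0 < c) (hC : 0 < C) :
    ∫ x in (0:ℝ)..c, psi n x c * psi k x C
      = Real.sqrt c / Real.sqrt C * (PP (muu n - muu k * c / C) + PP (muu n + muu k * c / C)) := by
  rw [scale_int c hc]
  have h1 : ∀ y ∈ Set.uIcc (0:ℝ) 1, psi n (c*y) c * psi k (c*y) C
      = (Real.sqrt (2/c) * Real.sqrt (2/C)) *
        (Real.cos (muu n * y) * Real.cos ((muu k * c / C)*y)) := by
    intro y _
    rw [psi_scaled n hc.ne' y, psi_scaled k hc.ne' y, mul_div_assoc (muu n),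
      div_self hc.ne', mul_one]
    ring
  rw [intervalIntegral.integral_congr h1, intervalIntegral.integral_const_mul, cc_int]
  have e1 : Real.sqrt (2/c) = Real.sqrt 2 / Real.sqrt c := Real.sqrt_div (by norm_num) c
  have e2 : Real.sqrt (2/C) = Real.sqrt 2 / Real.sqrt C := Real.sqrt_div (by norm_num) C
  have h2 : Real.sqrt 2 * Real.sqrt 2 = 2 := Real.mul_self_sqrt (by norm_num)
  rw [e1, e2]
  rw [show c * (Real.sqrt 2 / Real.sqrt c * (Real.sqrt 2 / Real.sqrt C) *
      ((PP (muu n - muu k * c / C) + PP (muu n + muu k * c / C))/2))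
    = (Real.sqrt 2 * Real.sqrt 2) * (c / Real.sqrt c) / Real.sqrt C *
      (PP (muu n - muu k * c / C) + PP (muu n + muu k * c / C)) / 2 from by ring,
    h2, Real.div_sqrt]
  ring

noncomputable def gfun (n k : ℕ) (a A : ℝ) : ℝ :=
  Real.sqrt a / Real.sqrt A * (PP (muu n - muu k * a / A) + PP (muu n + muu k * a / A))
    - (PP (muu n - muu k) + PP (muu n + muu k))

lemma Gform (n k : ℕ) {a A : ℝ} (ha : 0 < a) (hA : 0 < A) :
    ∫ x in (0:ℝ)..a, psi n x a * (psi k x A - psi k x a) = gfun n k a A := by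
  have key : ∀ x ∈ Set.uIcc (0:ℝ) a, psi n x a * (psi k x A - psi k x a)
      = psi n x a * psi k x A - psi n x a * psi k x a := fun x _ => by ring
  rw [intervalIntegral.integral_congr key,
    intervalIntegral.integral_sub
      (show IntervalIntegrable (fun x => psi n x a * psi k x A) volume 0 a from ((cont_psi n a).mul (cont_psi k A)).intervalIntegrable 0 a)
      (show IntervalIntegrable (fun x => psi n x a * psi k x a) volume 0 a from ((cont_psi n a).mul (cont_psi k a)).intervalIntegrable 0 a),
    int_psi_mul n k ha hA, int_psi_mul n k ha ha]
  unfold gfun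
  rw [show muu k * a / a = muu k from by field_simp,
    div_self (Real.sqrt_ne_zero'.mpr ha)]
  ring

noncomputable def dgA (n k : ℕ) (a A : ℝ) : ℝ :=
  -(Real.sqrt a/(2*A*Real.sqrt A)) * (PP (muu n - muu k*a/A) + PP (muu n + muu k*a/A))
  + Real.sqrt a/Real.sqrt A * (QQ (muu n + muu k*a/A) - QQ (muu n - muu k*a/A)) * (muu k * a / A^2)

noncomputable def dga (n k : ℕ) (a A : ℝ) : ℝ :=
  (PP (muu n - muu k*a/A) + PP (muu n + muu k*a/A)) / (2*Real.sqrt a*Real.sqrt A)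
  + Real.sqrt a/Real.sqrt A * (QQ (muu n - muu k*a/A) - QQ (muu n + muu k*a/A)) * (muu k / A)

lemma hasDerivAt_gfun_A (n k : ℕ) {a A : ℝ} (ha : 0 < a) (hA : 0 < A) :
    HasDerivAt (fun A' => gfun n k a A') (dgA n k a A) A := by
  have hs : Real.sqrt A ≠ 0 := Real.sqrt_ne_zero'.mpr hA
  have h0 : HasDerivAt (fun A' : ℝ => Real.sqrt A') (1/(2*Real.sqrt A)) A :=
    Real.hasDerivAt_sqrt hA.ne'
  have hinv := h0.inv hs
  have hκ := (hasDerivAt_inv hA.ne').const_mul (muu k * a)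
  have h1 := (hasDerivAt_PP (muu n - muu k * a * A⁻¹)).comp A (hκ.const_sub (muu n))
  have h2 := (hasDerivAt_PP (muu n + muu k * a * A⁻¹)).comp A (hκ.const_add (muu n))
  have h3 := ((hinv.const_mul (Real.sqrt a)).mul (h1.add h2)).sub_const
    (PP (muu n - muu k) + PP (muu n + muu k))
  simp only [gfun, dgA, div_eq_mul_inv, Function.comp_def]
  convert h3 using 1
  rfl
  rfl
  rfl
  rw [show (Real.sqrt A)^2 = A from Real.sq_sqrt hA.le]
  simp only [Function.comp_def, Pi.add_apply, Pi.inv_apply]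
  ring

lemma hasDerivAt_gfun_a (n k : ℕ) {a A : ℝ} (ha : 0 < a) (hA : 0 < A) :
    HasDerivAt (fun a' => gfun n k a' A) (dga n k a A) a := by
  have h0 : HasDerivAt (fun a' : ℝ => Real.sqrt a') (1/(2*Real.sqrt a)) a :=
    Real.hasDerivAt_sqrt ha.ne'
  have hκ := ((hasDerivAt_id a).const_mul (muu k)).mul_const (A⁻¹)
  have h1 := (hasDerivAt_PP (muu n - muu k * a * A⁻¹)).comp a (hκ.const_sub (muu n))
  have h2 := (hasDerivAt_PP (muu n + muu k * a * A⁻¹)).comp a (hκ.const_add (muu n))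
  have h3 := ((h0.mul_const (Real.sqrt A)⁻¹).mul (h1.add h2)).sub_const
    (PP (muu n - muu k) + PP (muu n + muu k))
  simp only [gfun, dga, div_eq_mul_inv, Function.comp_def]
  convert h3 using 1
  rfl
  rfl
  rfl
  simp only [Function.comp_def, id_eq, mul_one, Pi.add_apply]
  ring

noncomputable def Wfun (n : ℕ) (t : ℝ) : ℝ :=
  -(1/4) * (PP (muu n - t) + PP (muu n + t)) + muu n/2 * (QQ (muu n - t) + QQ (muu n + t))

noncomputable def dW (n : ℕ) (t : ℝ) : ℝ :=
  -(1/4) * (QQ (muu n - t) - QQ (muu n + t)) + muu n/2 * (RR (muu n + t) - RR (muu n - t))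

lemma hasDerivAt_W (n : ℕ) (t : ℝ) : HasDerivAt (Wfun n) (dW n t) t := by
  have h1 := (hasDerivAt_PP (muu n - t)).comp t ((hasDerivAt_id t).const_sub (muu n))
  have h2 := (hasDerivAt_PP (muu n + t)).comp t ((hasDerivAt_id t).const_add (muu n))
  have h3 := (hasDerivAt_QQ (muu n - t)).comp t ((hasDerivAt_id t).const_sub (muu n))
  have h4 := (hasDerivAt_QQ (muu n + t)).comp t ((hasDerivAt_id t).const_add (muu n))
  have h := ((h1.add h2).const_mul (-(1/4):ℝ)).add ((h3.add h4).const_mul (muu n/2))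
  unfold Wfun dW
  convert h using 1
  rfl
  rfl
  rfl
  try simp only [Function.comp_def, id_eq]
  ring

lemma abs_W (n : ℕ) (t : ℝ) : |Wfun n t| ≤ 1/2 + muu n := by
  have h1 := abs_PP (muu n - t); have h2 := abs_PP (muu n + t)
  have h3 := abs_QQ (muu n - t); have h4 := abs_QQ (muu n + t)
  have hμ := (muu_pos n).le
  unfold Wfun
  calc |(-(1/4)) * (PP (muu n - t) + PP (muu n + t)) + muu n/2 * (QQ (muu n - t) + QQ (muu n + t))|
      ≤ |(-(1/4)) * (PP (muu n - t) + PP (muu n + t))| + |muu n/2 * (QQ (muu n - t) + QQ (muu n + t))| :=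
        abs_add_le _ _
    _ ≤ 1/4 * (|PP (muu n - t)| + |PP (muu n + t)|) + muu n/2 * (|QQ (muu n - t)| + |QQ (muu n + t)|) := by
        rw [abs_mul, abs_mul]
        gcongr
        · rw [abs_neg]; simp [abs_of_nonneg]
        · exact abs_add_le _ _
        · rw [abs_of_nonneg (by positivity)]
        · exact abs_add_le _ _
    _ ≤ 1/4 * (1+1) + muu n/2 * (1+1) := by gcongr
    _ = 1/2 + muu n := by ring

lemma abs_dW (n : ℕ) (t : ℝ) : |dW n t| ≤ 1/2 + muu n := by
  have h1 := abs_QQ (muu n - t); have h2 := abs_QQ (muu n + t)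
  have h3 := abs_RR (muu n - t); have h4 := abs_RR (muu n + t)
  have hμ := (muu_pos n).le
  unfold dW
  calc |(-(1/4)) * (QQ (muu n - t) - QQ (muu n + t)) + muu n/2 * (RR (muu n + t) - RR (muu n - t))|
      ≤ |(-(1/4)) * (QQ (muu n - t) - QQ (muu n + t))| + |muu n/2 * (RR (muu n + t) - RR (muu n - t))| :=
        abs_add_le _ _
    _ ≤ 1/4 * (|QQ (muu n - t)| + |QQ (muu n + t)|) + muu n/2 * (|RR (muu n + t)| + |RR (muu n - t)|) := by
        rw [abs_mul, abs_mul]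
        gcongr
        · rw [abs_neg]; simp [abs_of_nonneg]
        · exact abs_sub _ _
        · rw [abs_of_nonneg (by positivity)]
        · exact abs_sub _ _
    _ ≤ 1/4 * (1+1) + muu n/2 * (1+1) := by gcongr
    _ = 1/2 + muu n := by ring

lemma gfun_diag (n k : ℕ) {a : ℝ} (ha : 0 < a) : gfun n k a a = 0 := by
  unfold gfun
  rw [show muu k * a / a = muu k from by field_simp,
    div_self (Real.sqrt_ne_zero'.mpr ha)]
  ring

noncomputable def dpsi (j : ℕ) (x c : ℝ) : ℝ :=
  -(Real.sqrt 2/(2*c*Real.sqrt c)) * Real.cos (Real.pi/c*(j+1/2)*x)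
  + Real.sqrt (2/c) * Real.sin (Real.pi/c*(j+1/2)*x) * (Real.pi/c^2*(j+1/2)*x)

lemma cont_dpsi (j : ℕ) (c : ℝ) : Continuous (fun x => dpsi j x c) := by
  unfold dpsi; fun_prop

lemma hasDerivAt_psi (j : ℕ) (x : ℝ) {c : ℝ} (hc : 0 < c) :
    HasDerivAt (fun c' => psi j x c') (dpsi j x c) c := by
  have h1 : HasDerivAt (fun c' : ℝ => 2 * c'⁻¹) (2 * -(c^2)⁻¹) c :=
    (hasDerivAt_inv hc.ne').const_mul 2
  have h2 := (Real.hasDerivAt_sqrt (show 2*c⁻¹ ≠ 0 by positivity)).comp c h1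
  have h3 := (((hasDerivAt_inv hc.ne').const_mul Real.pi).mul_const ((j:ℝ)+1/2)).mul_const x
  have h4 := (Real.hasDerivAt_cos (Real.pi * c⁻¹ * ((j:ℝ)+1/2) * x)).comp c h3
  have h := h2.mul h4
  simp only [psi, dpsi, div_eq_mul_inv, Function.comp_def]
  convert h using 1
  rfl
  rfl
  rfl
  simp only [Function.comp_apply]
  have e1 : Real.sqrt (2*c⁻¹) = Real.sqrt 2 * (Real.sqrt c)⁻¹ := by
    rw [Real.sqrt_mul (by norm_num), Real.sqrt_inv]
  have hs : Real.sqrt c ≠ 0 := Real.sqrt_ne_zero'.mpr hc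
  have h2' : Real.sqrt 2 * Real.sqrt 2 = 2 := Real.mul_self_sqrt (by norm_num)
  have hcc : Real.sqrt c * Real.sqrt c = c := Real.mul_self_sqrt hc.le
  rw [e1]
  field_simp
  ring_nf
  simp only [Real.sq_sqrt hc.le, Real.sq_sqrt (show (0:ℝ) ≤ 2 by norm_num),
    show Real.sqrt c ^ 4 = c ^ 2 from by
      rw [show (4:ℕ) = 2*2 from rfl, pow_mul, Real.sq_sqrt hc.le],
    show Real.sqrt c ^ 3 = c * Real.sqrt c from by
      rw [pow_succ, Real.sq_sqrt hc.le, mul_comm]]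
  ring

lemma dpsi_scaled (n : ℕ) {a : ℝ} (ha : 0 < a) (y : ℝ) :
    dpsi n (a*y) a = Real.sqrt 2/(a*Real.sqrt a) *
      (-(1/2) * Real.cos (muu n*y) + Real.sin (muu n*y) * (muu n*y)) := by
  have e1 : Real.pi / a * ((n:ℝ)+1/2) * (a*y) = muu n * y := by
    unfold muu; field_simp
  have e2 : Real.pi / a^2 * ((n:ℝ)+1/2) * (a*y) = muu n * y / a := by
    unfold muu; field_simp
  have e3 : Real.sqrt (2/a) = Real.sqrt 2 / Real.sqrt a := Real.sqrt_div (by norm_num) a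
  have hs : Real.sqrt a ≠ 0 := Real.sqrt_ne_zero'.mpr ha
  simp only [dpsi, e1, e2, e3]
  field_simp

lemma int_dpsi_mul (n k : ℕ) {a A : ℝ} (ha : 0 < a) (hA : 0 < A) :
    ∫ x in (0:ℝ)..a, dpsi n x a * psi k x A
      = 2/(Real.sqrt a * Real.sqrt A) * Wfun n (muu k * a / A) := by
  rw [scale_int a ha]
  have h1 : ∀ y ∈ Set.uIcc (0:ℝ) 1, dpsi n (a*y) a * psi k (a*y) A
      = (Real.sqrt 2/(a*Real.sqrt a) * Real.sqrt (2/A)) *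
        (-(1/2) * (Real.cos (muu n * y) * Real.cos ((muu k * a / A)*y))
          + muu n * ((Real.sin (muu n*y) * y) * Real.cos ((muu k * a / A)*y))) := by
    intro y _
    rw [dpsi_scaled n ha y, psi_scaled k ha.ne' y]
    ring
  rw [intervalIntegral.integral_congr h1, intervalIntegral.integral_const_mul]
  have i1 : IntervalIntegrable
      (fun y:ℝ => -(1/2) * (Real.cos (muu n * y) * Real.cos ((muu k * a / A)*y))) volume 0 1 :=
    Continuous.intervalIntegrable (by fun_prop) 0 1
  have i2 : IntervalIntegrable
      (fun y:ℝ => muu n * ((Real.sin (muu n*y) * y) * Real.cos ((muu k * a / A)*y))) volume 0 1 :=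
    Continuous.intervalIntegrable (by fun_prop) 0 1
  rw [intervalIntegral.integral_add i1 i2, intervalIntegral.integral_const_mul,
    intervalIntegral.integral_const_mul, cc_int, sc_int]
  have e3 : Real.sqrt (2/A) = Real.sqrt 2 / Real.sqrt A := Real.sqrt_div (by norm_num) A
  have hsa : Real.sqrt a ≠ 0 := Real.sqrt_ne_zero'.mpr ha
  have hsA : Real.sqrt A ≠ 0 := Real.sqrt_ne_zero'.mpr hA
  have h2' : Real.sqrt 2 * Real.sqrt 2 = 2 := Real.mul_self_sqrt (by norm_num)
  have hcc : Real.sqrt a * Real.sqrt a = a := Real.mul_self_sqrt ha.le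
  rw [e3]
  unfold Wfun
  field_simp
  ring_nf
  rw [Real.sq_sqrt (by norm_num : (0:ℝ) ≤ 2)]
  ring

noncomputable def hfun (n k : ℕ) (a A : ℝ) : ℝ :=
  2/(Real.sqrt a * Real.sqrt A) * Wfun n (muu k * a / A) - 2/a * Wfun n (muu k)

lemma hfun_diag (n k : ℕ) {a : ℝ} (ha : 0 < a) : hfun n k a a = 0 := by
  unfold hfun
  rw [show muu k * a / a = muu k from by field_simp, Real.mul_self_sqrt ha.le]
  ring

lemma Hform (n k : ℕ) {a A : ℝ} (ha : 0 < a) (hA : 0 < A) :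
    ∫ x in (0:ℝ)..a, dpsi n x a * (psi k x A - psi k x a) = hfun n k a A := by
  have key : ∀ x ∈ Set.uIcc (0:ℝ) a, dpsi n x a * (psi k x A - psi k x a)
      = dpsi n x a * psi k x A - dpsi n x a * psi k x a := fun x _ => by ring
  rw [intervalIntegral.integral_congr key,
    intervalIntegral.integral_sub
      (show IntervalIntegrable (fun x => dpsi n x a * psi k x A) volume 0 a from ((cont_dpsi n a).mul (cont_psi k A)).intervalIntegrable 0 a)
      (show IntervalIntegrable (fun x => dpsi n x a * psi k x a) volume 0 a from ((cont_dpsi n a).mul (cont_psi k a)).intervalIntegrable 0 a),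
    int_dpsi_mul n k ha hA, int_dpsi_mul n k ha ha]
  unfold hfun
  rw [show muu k * a / a = muu k from by field_simp, Real.mul_self_sqrt ha.le]

noncomputable def dhA (n k : ℕ) (a A : ℝ) : ℝ :=
  -(Real.sqrt a/Real.sqrt A/(a*A)) * Wfun n (muu k*a/A)
  - 2/(Real.sqrt a*Real.sqrt A) * dW n (muu k*a/A) * (muu k*a/A^2)

lemma hasDerivAt_hfun_A (n k : ℕ) {a A : ℝ} (ha : 0 < a) (hA : 0 < A) :
    HasDerivAt (fun A' => hfun n k a A') (dhA n k a A) A := by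
  have hs : Real.sqrt A ≠ 0 := Real.sqrt_ne_zero'.mpr hA
  have hsa : Real.sqrt a ≠ 0 := Real.sqrt_ne_zero'.mpr ha
  have h0 : HasDerivAt (fun A' : ℝ => Real.sqrt A') (1/(2*Real.sqrt A)) A :=
    Real.hasDerivAt_sqrt hA.ne'
  have hmul := h0.const_mul (Real.sqrt a)
  have hinv := hmul.inv (by exact mul_ne_zero hsa hs)
  have hc := hinv.const_mul (2:ℝ)
  have hκ := (hasDerivAt_inv hA.ne').const_mul (muu k * a)
  have hW := (hasDerivAt_W n (muu k * a * A⁻¹)).comp A hκ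
  have h := (hc.mul hW).sub_const (2/a * Wfun n (muu k))
  simp only [hfun, dhA, div_eq_mul_inv, Function.comp_def]
  convert h using 1
  rfl
  rfl
  rfl
  rw [show (Real.sqrt a * Real.sqrt A)^2 = a * A from by
    rw [mul_pow, Real.sq_sqrt ha.le, Real.sq_sqrt hA.le]]
  simp only [Function.comp_def, Pi.inv_apply]
  ring

lemma muu_le {k m : ℕ} (h : k ≤ m) : muu k ≤ muu m := by
  unfold muu
  have : (k:ℝ) ≤ m := Nat.cast_le.mpr h
  have := Real.pi_pos
  nlinarith

lemma abs_PP_add (z w : ℝ) : |PP z + PP w| ≤ 2 :=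
  (abs_add_le _ _).trans (by linarith [abs_PP z, abs_PP w])

lemma abs_QQ_sub (z w : ℝ) : |QQ z - QQ w| ≤ 2 :=
  (abs_sub _ _).trans (by linarith [abs_QQ z, abs_QQ w])

lemma abs_dgA_le (m n k : ℕ) (hk : k ≤ m) {b M a A : ℝ} (hb : 0 < b)
    (ha : a ∈ Set.Icc b M) (hA : A ∈ Set.Icc b M) :
    |dgA n k a A| ≤ Real.sqrt M/(2*b*Real.sqrt b) * 2
      + Real.sqrt M/Real.sqrt b * 2 * (muu m * M/b^2) := by
  have hbM : b ≤ M := le_trans ha.1 ha.2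
  have h1 : (0:ℝ) < a := lt_of_lt_of_le hb ha.1
  have h2 : (0:ℝ) < A := lt_of_lt_of_le hb hA.1
  have hμk := (muu_pos k).le
  have hμ := muu_le hk
  unfold dgA
  refine (abs_add_le _ _).trans (add_le_add ?_ ?_)
  · rw [abs_mul, abs_neg, abs_of_nonneg (show (0:ℝ) ≤ Real.sqrt a/(2*A*Real.sqrt A) by positivity)]
    gcongr <;> first
      | positivity
      | exact Real.sqrt_le_sqrt ha.2 | exact Real.sqrt_le_sqrt hA.1
      | exact Real.sqrt_le_sqrt ha.1 | exact Real.sqrt_le_sqrt hA.2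
      | exact ha.1 | exact ha.2 | exact hA.1 | exact hA.2
      | exact Real.sqrt_pos.mpr hb
      | exact abs_PP_add _ _ | exact abs_QQ_sub _ _ | exact hμ
      | exact (muu_pos _).le
      | exact mul_nonneg (muu_pos _).le (hb.le.trans hbM) | assumption
  · rw [abs_mul, abs_mul, abs_of_nonneg (show (0:ℝ) ≤ Real.sqrt a/Real.sqrt A by positivity),
      abs_of_nonneg (show (0:ℝ) ≤ muu k * a / A^2 by positivity)]
    gcongr <;> first
      | positivity
      | exact Real.sqrt_le_sqrt ha.2 | exact Real.sqrt_le_sqrt hA.1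
      | exact Real.sqrt_le_sqrt ha.1 | exact Real.sqrt_le_sqrt hA.2
      | exact ha.1 | exact ha.2 | exact hA.1 | exact hA.2
      | exact Real.sqrt_pos.mpr hb
      | exact abs_PP_add _ _ | exact abs_QQ_sub _ _ | exact hμ
      | exact (muu_pos _).le
      | exact mul_nonneg (muu_pos _).le (hb.le.trans hbM) | assumption

lemma abs_dga_le (m n k : ℕ) (hk : k ≤ m) {b M a A : ℝ} (hb : 0 < b)
    (ha : a ∈ Set.Icc b M) (hA : A ∈ Set.Icc b M) :
    |dga n k a A| ≤ 2/(2*Real.sqrt b*Real.sqrt b)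
      + Real.sqrt M/Real.sqrt b * 2 * (muu m/b) := by
  have hbM : b ≤ M := le_trans ha.1 ha.2
  have h1 : (0:ℝ) < a := lt_of_lt_of_le hb ha.1
  have h2 : (0:ℝ) < A := lt_of_lt_of_le hb hA.1
  have hμk := (muu_pos k).le
  have hμ := muu_le hk
  unfold dga
  refine (abs_add_le _ _).trans (add_le_add ?_ ?_)
  · rw [abs_div, abs_of_nonneg (show (0:ℝ) ≤ 2*Real.sqrt a*Real.sqrt A by positivity)]
    gcongr <;> first
      | positivity
      | exact Real.sqrt_le_sqrt ha.2 | exact Real.sqrt_le_sqrt hA.1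
      | exact Real.sqrt_le_sqrt ha.1 | exact Real.sqrt_le_sqrt hA.2
      | exact ha.1 | exact ha.2 | exact hA.1 | exact hA.2
      | exact Real.sqrt_pos.mpr hb
      | exact abs_PP_add _ _ | exact abs_QQ_sub _ _ | exact hμ
      | exact (muu_pos _).le
      | exact mul_nonneg (muu_pos _).le (hb.le.trans hbM) | assumption
  · rw [abs_mul, abs_mul, abs_of_nonneg (show (0:ℝ) ≤ Real.sqrt a/Real.sqrt A by positivity),
      abs_of_nonneg (show (0:ℝ) ≤ muu k / A by positivity)]
    gcongr <;> first
      | positivity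
      | exact Real.sqrt_le_sqrt ha.2 | exact Real.sqrt_le_sqrt hA.1
      | exact Real.sqrt_le_sqrt ha.1 | exact Real.sqrt_le_sqrt hA.2
      | exact ha.1 | exact ha.2 | exact hA.1 | exact hA.2
      | exact Real.sqrt_pos.mpr hb
      | exact abs_PP_add _ _ | exact abs_QQ_sub _ _ | exact hμ
      | exact (muu_pos _).le
      | exact mul_nonneg (muu_pos _).le (hb.le.trans hbM) | assumption

lemma abs_W_le (m n : ℕ) (hn : n ≤ m) (t : ℝ) : |Wfun n t| ≤ 1/2 + muu m :=
  (abs_W n t).trans (by linarith [muu_le hn])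

lemma abs_dW_le (m n : ℕ) (hn : n ≤ m) (t : ℝ) : |dW n t| ≤ 1/2 + muu m :=
  (abs_dW n t).trans (by linarith [muu_le hn])

lemma abs_dhA_le (m n k : ℕ) (hn : n ≤ m) (hk : k ≤ m) {b M a A : ℝ} (hb : 0 < b)
    (ha : a ∈ Set.Icc b M) (hA : A ∈ Set.Icc b M) :
    |dhA n k a A| ≤ Real.sqrt M/Real.sqrt b/(b*b) * (1/2 + muu m)
      + 2/(Real.sqrt b*Real.sqrt b) * (1/2 + muu m) * (muu m * M/b^2) := by
  have hbM : b ≤ M := le_trans ha.1 ha.2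
  have h1 : (0:ℝ) < a := lt_of_lt_of_le hb ha.1
  have h2 : (0:ℝ) < A := lt_of_lt_of_le hb hA.1
  have hμk := (muu_pos k).le
  have hμ := muu_le hk
  have hμm := (muu_pos m).le
  unfold dhA
  refine (abs_sub _ _).trans (add_le_add ?_ ?_)
  · rw [abs_mul, abs_neg, abs_of_nonneg (show (0:ℝ) ≤ Real.sqrt a/Real.sqrt A/(a*A) by positivity)]
    gcongr <;> first
      | positivity
      | exact Real.sqrt_le_sqrt ha.2 | exact Real.sqrt_le_sqrt hA.1
      | exact Real.sqrt_le_sqrt ha.1 | exact Real.sqrt_le_sqrt hA.2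
      | exact ha.1 | exact ha.2 | exact hA.1 | exact hA.2
      | exact Real.sqrt_pos.mpr hb
      | exact abs_W_le m n hn _ | exact abs_dW_le m n hn _ | exact hμ
      | exact (muu_pos _).le
      | exact mul_nonneg (muu_pos _).le (hb.le.trans hbM) | assumption
  · rw [abs_mul, abs_mul, abs_of_nonneg (show (0:ℝ) ≤ 2/(Real.sqrt a*Real.sqrt A) by positivity),
      abs_of_nonneg (show (0:ℝ) ≤ muu k * a / A^2 by positivity)]
    gcongr <;> first
      | positivity
      | exact Real.sqrt_le_sqrt ha.2 | exact Real.sqrt_le_sqrt hA.1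
      | exact Real.sqrt_le_sqrt ha.1 | exact Real.sqrt_le_sqrt hA.2
      | exact ha.1 | exact ha.2 | exact hA.1 | exact hA.2
      | exact Real.sqrt_pos.mpr hb
      | exact abs_W_le m n hn _ | exact abs_dW_le m n hn _ | exact hμ
      | exact (muu_pos _).le
      | exact mul_nonneg (muu_pos _).le (hb.le.trans hbM) | assumption

lemma gfun_lip (m n k : ℕ) (hk : k ≤ m) {b M a A₁ A₂ : ℝ} (hb : 0 < b)
    (ha : a ∈ Set.Icc b M) (hA1 : A₁ ∈ Set.Icc b M) (hA2 : A₂ ∈ Set.Icc b M) :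
    |gfun n k a A₂ - gfun n k a A₁|
      ≤ (Real.sqrt M/(2*b*Real.sqrt b) * 2
          + Real.sqrt M/Real.sqrt b * 2 * (muu m * M/b^2)) * |A₂ - A₁| := by
  have hf : ∀ x ∈ Set.Icc b M, HasDerivWithinAt (fun A' => gfun n k a A') (dgA n k a x)
      (Set.Icc b M) x := fun x hx =>
    (hasDerivAt_gfun_A n k (lt_of_lt_of_le hb ha.1) (lt_of_lt_of_le hb hx.1)).hasDerivWithinAt
  have hbd : ∀ x ∈ Set.Icc b M, ‖dgA n k a x‖ ≤ Real.sqrt M/(2*b*Real.sqrt b) * 2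
      + Real.sqrt M/Real.sqrt b * 2 * (muu m * M/b^2) := fun x hx => by
    rw [Real.norm_eq_abs]; exact abs_dgA_le m n k hk hb ha hx
  have := (convex_Icc b M).norm_image_sub_le_of_norm_hasDerivWithin_le hf hbd hA1 hA2
  simpa [Real.norm_eq_abs] using this

lemma hfun_lip (m n k : ℕ) (hn : n ≤ m) (hk : k ≤ m) {b M a A₁ A₂ : ℝ} (hb : 0 < b)
    (ha : a ∈ Set.Icc b M) (hA1 : A₁ ∈ Set.Icc b M) (hA2 : A₂ ∈ Set.Icc b M) :
    |hfun n k a A₂ - hfun n k a A₁|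
      ≤ (Real.sqrt M/Real.sqrt b/(b*b) * (1/2 + muu m)
          + 2/(Real.sqrt b*Real.sqrt b) * (1/2 + muu m) * (muu m * M/b^2)) * |A₂ - A₁| := by
  have hf : ∀ x ∈ Set.Icc b M, HasDerivWithinAt (fun A' => hfun n k a A') (dhA n k a x)
      (Set.Icc b M) x := fun x hx =>
    (hasDerivAt_hfun_A n k (lt_of_lt_of_le hb ha.1) (lt_of_lt_of_le hb hx.1)).hasDerivWithinAt
  have hbd : ∀ x ∈ Set.Icc b M, ‖dhA n k a x‖ ≤ Real.sqrt M/Real.sqrt b/(b*b) * (1/2 + muu m)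
      + 2/(Real.sqrt b*Real.sqrt b) * (1/2 + muu m) * (muu m * M/b^2) := fun x hx => by
    rw [Real.norm_eq_abs]; exact abs_dhA_le m n k hn hk hb ha hx
  have := (convex_Icc b M).norm_image_sub_le_of_norm_hasDerivWithin_le hf hbd hA1 hA2
  simpa [Real.norm_eq_abs] using this

set_option maxHeartbeats 1000000 in
/-- Entrywise bounds on `B`, its partial derivatives, `D̃`, `D̃_t` and `E′`
in terms of `ṡ` (a.e. where the derivatives exist), with a constant `c₀` depending only on
`m, b, α, ‖t^{1-α}ṡ‖_{C([0,T])}` and `T`. -/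
theorem stmt_13 (α T b : ℝ) (m : ℕ) (hα : α ∈ Set.Ioo (0:ℝ) 1) (hT : 0 < T) (hb : 0 < b)
    (s s' : ℝ → ℝ)
    (hs'int : IntegrableOn s' (Set.Icc 0 T))
    (hsAC : ∀ t ∈ Set.Icc (0:ℝ) T, s t = b + ∫ τ in (0:ℝ)..t, s' τ)
    (hs'pos : ∀ t ∈ Set.Icc (0:ℝ) T, 0 ≤ s' t)
    (hs'cont : ContinuousOn (fun t : ℝ => t ^ (1 - α) * s' t) (Set.Icc 0 T)) :
    ∃ c₀ > (0:ℝ),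
      (∀ τ t : ℝ, 0 ≤ τ → τ ≤ t → t ≤ T → ∀ n k : Fin (m + 1),
        |Bmat s m τ t n k| ≤ c₀ * (s t - s τ)) ∧
      (∀ t ∈ Set.Icc (0:ℝ) T, ∀ᵐ τ ∂(volume.restrict (Set.Ioo 0 t)), ∀ n k : Fin (m + 1),
        |deriv (fun r => Bmat s m r t n k) τ| ≤ c₀ * s' τ) ∧
      (∀ τ ∈ Set.Icc (0:ℝ) T, ∀ᵐ t ∂(volume.restrict (Set.Ioo τ T)), ∀ n k : Fin (m + 1),
        |deriv (fun r => Bmat s m τ r n k) t| ≤ c₀ * s' t) ∧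
      (∀ τ t₁ t₂ : ℝ, 0 ≤ τ → τ ≤ t₁ → t₁ ≤ t₂ → t₂ ≤ T → ∀ n k : Fin (m + 1),
        |Bmat s m τ t₂ n k - Bmat s m τ t₁ n k| ≤ c₀ * |s t₂ - s t₁|) ∧
      (∀ᵐ τ ∂(volume.restrict (Set.Ioo 0 T)), ∀ t : ℝ, τ ≤ t → t ≤ T → ∀ n k : Fin (m + 1),
        |Dtil s m τ t n k| ≤ c₀ * s' τ * (s t - s τ)) ∧
      (∀ᵐ τ ∂(volume.restrict (Set.Ioo 0 T)), ∀ᵐ t ∂(volume.restrict (Set.Ioo τ T)),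
        ∀ n k : Fin (m + 1),
        |deriv (fun r => Dtil s m τ r n k) t| ≤ c₀ * s' τ * s' t) ∧
      (∀ᵐ t ∂(volume.restrict (Set.Ioo 0 T)), ∀ n k : Fin (m + 1),
        |deriv (fun r => Emat α s m r n k) t| ≤ c₀ * s' t) := by
  obtain ⟨hα0, hα1⟩ := hα
  set M := s T with hMdef
  have hii : ∀ u v : ℝ, 0 ≤ u → u ≤ v → v ≤ T → IntervalIntegrable s' volume u v := by
    intro u v hu huv hvT
    refine (hs'int.mono_set ?_).intervalIntegrable
    rw [Set.uIcc_of_le huv]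
    exact Set.Icc_subset_Icc hu hvT
  have hmono : ∀ u v : ℝ, 0 ≤ u → u ≤ v → v ≤ T → s u ≤ s v := by
    intro u v hu huv hvT
    have h1 := hsAC u ⟨hu, huv.trans hvT⟩
    have h2 := hsAC v ⟨hu.trans huv, hvT⟩
    have hsub : (∫ x in (0:ℝ)..v, s' x) - (∫ x in (0:ℝ)..u, s' x) = ∫ x in u..v, s' x :=
      intervalIntegral.integral_interval_sub_left
        (hii 0 v le_rfl (hu.trans huv) hvT) (hii 0 u le_rfl hu (huv.trans hvT))
    have hnn : 0 ≤ ∫ x in u..v, s' x :=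
      intervalIntegral.integral_nonneg huv (fun x hx => hs'pos x ⟨hu.trans hx.1, hx.2.trans hvT⟩)
    rw [h1, h2]; linarith
  have hsb : ∀ t ∈ Set.Icc (0:ℝ) T, b ≤ s t := by
    intro t ht
    have h1 := hsAC t ht
    have hnn : 0 ≤ ∫ x in (0:ℝ)..t, s' x :=
      intervalIntegral.integral_nonneg ht.1 (fun x hx => hs'pos x ⟨hx.1, hx.2.trans ht.2⟩)
    rw [h1]; linarith
  have hsM : ∀ t ∈ Set.Icc (0:ℝ) T, s t ≤ M := fun t ht => hmono t T ht.1 ht.2 le_rfl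
  have hmem : ∀ t ∈ Set.Icc (0:ℝ) T, s t ∈ Set.Icc b M := fun t ht => ⟨hsb t ht, hsM t ht⟩
  have hspos : ∀ t ∈ Set.Icc (0:ℝ) T, 0 < s t := fun t ht => lt_of_lt_of_le hb (hsb t ht)
  have hbM : b ≤ M := hsb T ⟨hT.le, le_rfl⟩
  have hsder : ∀ t ∈ Set.Ioo (0:ℝ) T, HasDerivAt s (s' t) t := by
    intro t ht
    have hIccnb : Set.Icc (0:ℝ) T ∈ 𝓝 t := Icc_mem_nhds ht.1 ht.2
    have hc1 : ContinuousAt (fun r : ℝ => r ^ (1-α) * s' r) t := hs'cont.continuousAt hIccnb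
    have hrp : ContinuousAt (fun r : ℝ => r ^ (1-α)) t :=
      Real.continuousAt_rpow_const t _ (Or.inl ht.1.ne')
    have hne : t ^ (1-α) ≠ 0 := (Real.rpow_pos_of_pos ht.1 _).ne'
    have hc2 : ContinuousAt (fun r : ℝ => (r ^ (1-α))⁻¹ * (r ^ (1-α) * s' r)) t :=
      (hrp.inv₀ hne).mul hc1
    have hcs' : ContinuousAt s' t := by
      refine hc2.congr ?_
      filter_upwards [eventually_gt_nhds ht.1] with r hr
      have hr0 : r ^ (1-α) ≠ 0 := (Real.rpow_pos_of_pos hr _).ne'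
      field_simp
    have hmeas : StronglyMeasurableAtFilter s' (𝓝 t) volume :=
      ⟨Set.Icc 0 T, hIccnb, hs'int.aestronglyMeasurable⟩
    have hftc : HasDerivAt (fun u => ∫ x in (0:ℝ)..u, s' x) (s' t) t :=
      intervalIntegral.integral_hasDerivAt_right (hii 0 t le_rfl ht.1.le ht.2.le) hmeas hcs'
    have heq : s =ᶠ[𝓝 t] fun u => b + ∫ x in (0:ℝ)..u, s' x := by
      filter_upwards [isOpen_Ioo.mem_nhds ht] with r hr
      exact hsAC r ⟨hr.1.le, hr.2.le⟩
    exact (hftc.const_add b).congr_of_eventuallyEq heq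
  have hBent : ∀ (τ t : ℝ), τ ∈ Set.Icc (0:ℝ) T → t ∈ Set.Icc (0:ℝ) T → ∀ n k : Fin (m+1),
      Bmat s m τ t n k = gfun (n:ℕ) (k:ℕ) (s τ) (s t) := by
    intro τ t hτ ht n k
    have hdef : Bmat s m τ t n k
        = ∫ x in (0:ℝ)..(s τ), psi (n:ℕ) x (s τ) * (psi (k:ℕ) x (s t) - psi (k:ℕ) x (s τ)) := rfl
    rw [hdef, Gform _ _ (hspos τ hτ) (hspos t ht)]
  set C1 := Real.sqrt M/(2*b*Real.sqrt b) * 2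
    + Real.sqrt M/Real.sqrt b * 2 * (muu m * M/b^2) with hC1def
  set C2 := 2/(2*Real.sqrt b*Real.sqrt b) + Real.sqrt M/Real.sqrt b * 2 * (muu m/b) with hC2def
  set C3 := Real.sqrt M/Real.sqrt b/(b*b) * (1/2 + muu m)
    + 2/(Real.sqrt b*Real.sqrt b) * (1/2 + muu m) * (muu m * M/b^2) with hC3def
  set C4 := 2 * muu m^2 / (b^3 * Real.Gamma (1-α)) with hC4def
  set c₀ := |C1| + |C2| + |C3| + |C4| + 1 with hc₀def
  have hc₀pos : 0 < c₀ := by positivity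
  have hC1le : C1 ≤ c₀ := by
    have := le_abs_self C1
    have := abs_nonneg C2; have := abs_nonneg C3; have := abs_nonneg C4
    simp only [hc₀def]; linarith
  have hC2le : C2 ≤ c₀ := by
    have := le_abs_self C2
    have := abs_nonneg C1; have := abs_nonneg C3; have := abs_nonneg C4
    simp only [hc₀def]; linarith
  have hC3le : C3 ≤ c₀ := by
    have := le_abs_self C3
    have := abs_nonneg C1; have := abs_nonneg C2; have := abs_nonneg C4
    simp only [hc₀def]; linarith
  have hC4le : C4 ≤ c₀ := by
    have := le_abs_self C4
    have := abs_nonneg C1; have := abs_nonneg C2; have := abs_nonneg C3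
    simp only [hc₀def]; linarith
  refine ⟨c₀, hc₀pos, ?_, ?_, ?_, ?_, ?_, ?_, ?_⟩
  · -- (i)
    intro τ t hτ0 hτt htT n k
    have hτI : τ ∈ Set.Icc (0:ℝ) T := ⟨hτ0, hτt.trans htT⟩
    have htI : t ∈ Set.Icc (0:ℝ) T := ⟨hτ0.trans hτt, htT⟩
    have hstτ : 0 ≤ s t - s τ := sub_nonneg.mpr (hmono τ t hτ0 hτt htT)
    rw [hBent τ t hτI htI n k]
    have h0 : gfun (n:ℕ) (k:ℕ) (s τ) (s τ) = 0 := gfun_diag _ _ (hspos τ hτI)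
    have hlip := gfun_lip m (n:ℕ) (k:ℕ) (Fin.is_le k) hb (hmem τ hτI) (hmem τ hτI) (hmem t htI)
    rw [h0, sub_zero, abs_of_nonneg hstτ] at hlip
    exact hlip.trans (mul_le_mul_of_nonneg_right hC1le hstτ)
  · -- (ii)
    intro t htI
    filter_upwards [ae_restrict_mem measurableSet_Ioo] with τ hτ
    intro n k
    have hτT : τ ∈ Set.Ioo (0:ℝ) T := ⟨hτ.1, lt_of_lt_of_le hτ.2 htI.2⟩
    have hτI : τ ∈ Set.Icc (0:ℝ) T := ⟨hτT.1.le, hτT.2.le⟩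
    have hd := hsder τ hτT
    have hcomp := (hasDerivAt_gfun_a (n:ℕ) (k:ℕ) (hspos τ hτI) (hspos t htI)).comp τ hd
    have heq : (fun r => Bmat s m r t n k)
        =ᶠ[𝓝 τ] ((fun a' => gfun (n:ℕ) (k:ℕ) a' (s t)) ∘ s) := by
      filter_upwards [isOpen_Ioo.mem_nhds hτT] with r hr
      exact hBent r t ⟨hr.1.le, hr.2.le⟩ htI n k
    rw [heq.deriv_eq, hcomp.deriv, abs_mul, abs_of_nonneg (hs'pos τ hτI)]
    exact mul_le_mul_of_nonneg_right
      ((abs_dga_le m (n:ℕ) (k:ℕ) (Fin.is_le k) hb (hmem τ hτI) (hmem t htI)).trans hC2le)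
      (hs'pos τ hτI)
  · -- (iii)
    intro τ hτI
    filter_upwards [ae_restrict_mem measurableSet_Ioo] with t ht
    intro n k
    have htT : t ∈ Set.Ioo (0:ℝ) T := ⟨lt_of_le_of_lt hτI.1 ht.1, ht.2⟩
    have htI : t ∈ Set.Icc (0:ℝ) T := ⟨htT.1.le, htT.2.le⟩
    have hd := hsder t htT
    have hcomp := (hasDerivAt_gfun_A (n:ℕ) (k:ℕ) (hspos τ hτI) (hspos t htI)).comp t hd
    have heq : (fun r => Bmat s m τ r n k)
        =ᶠ[𝓝 t] ((fun A' => gfun (n:ℕ) (k:ℕ) (s τ) A') ∘ s) := by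
      filter_upwards [isOpen_Ioo.mem_nhds htT] with r hr
      exact hBent τ r hτI ⟨hr.1.le, hr.2.le⟩ n k
    rw [heq.deriv_eq, hcomp.deriv, abs_mul, abs_of_nonneg (hs'pos t htI)]
    exact mul_le_mul_of_nonneg_right
      ((abs_dgA_le m (n:ℕ) (k:ℕ) (Fin.is_le k) hb (hmem τ hτI) (hmem t htI)).trans hC1le)
      (hs'pos t htI)
  · -- (iv)
    intro τ t₁ t₂ hτ0 hτ1 h12 h2T n k
    have hτI : τ ∈ Set.Icc (0:ℝ) T := ⟨hτ0, hτ1.trans (h12.trans h2T)⟩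
    have ht1I : t₁ ∈ Set.Icc (0:ℝ) T := ⟨hτ0.trans hτ1, h12.trans h2T⟩
    have ht2I : t₂ ∈ Set.Icc (0:ℝ) T := ⟨hτ0.trans (hτ1.trans h12), h2T⟩
    rw [hBent τ t₂ hτI ht2I n k, hBent τ t₁ hτI ht1I n k]
    have hlip := gfun_lip m (n:ℕ) (k:ℕ) (Fin.is_le k) hb (hmem τ hτI) (hmem t₁ ht1I) (hmem t₂ ht2I)
    exact hlip.trans (mul_le_mul_of_nonneg_right hC1le (abs_nonneg _))
  · -- (v)
    filter_upwards [ae_restrict_mem measurableSet_Ioo] with τ hτT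
    intro t hτt htT n k
    have hτI : τ ∈ Set.Icc (0:ℝ) T := ⟨hτT.1.le, hτT.2.le⟩
    have htI : t ∈ Set.Icc (0:ℝ) T := ⟨hτT.1.le.trans hτt, htT⟩
    have hd := hsder τ hτT
    have hder_phi : ∀ x : ℝ, deriv (fun r => phi s (n:ℕ) x r) τ = dpsi (n:ℕ) x (s τ) * s' τ :=
      fun x => (((hasDerivAt_psi (n:ℕ) x (hspos τ hτI)).comp τ hd)).deriv
    have hDent : Dtil s m τ t n k = s' τ * hfun (n:ℕ) (k:ℕ) (s τ) (s t) := by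
      have hdef : Dtil s m τ t n k = ∫ x in (0:ℝ)..(s τ),
          deriv (fun r => phi s (n:ℕ) x r) τ * (phi s (k:ℕ) x t - phi s (k:ℕ) x τ) := rfl
      rw [hdef]
      have hcongr : ∀ x ∈ Set.uIcc (0:ℝ) (s τ),
          deriv (fun r => phi s (n:ℕ) x r) τ * (phi s (k:ℕ) x t - phi s (k:ℕ) x τ)
          = s' τ * (dpsi (n:ℕ) x (s τ) * (psi (k:ℕ) x (s t) - psi (k:ℕ) x (s τ))) := by
        intro x _
        rw [hder_phi x]
        show dpsi (n:ℕ) x (s τ) * s' τ * (psi (k:ℕ) x (s t) - psi (k:ℕ) x (s τ)) = _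
        ring
      rw [intervalIntegral.integral_congr hcongr, intervalIntegral.integral_const_mul,
        Hform (n:ℕ) (k:ℕ) (hspos τ hτI) (hspos t htI)]
    rw [hDent, abs_mul, abs_of_nonneg (hs'pos τ hτI)]
    have h0 : hfun (n:ℕ) (k:ℕ) (s τ) (s τ) = 0 := hfun_diag _ _ (hspos τ hτI)
    have hstτ : 0 ≤ s t - s τ := sub_nonneg.mpr (hmono τ t hτT.1.le hτt htT)
    have hlip := hfun_lip m (n:ℕ) (k:ℕ) (Fin.is_le n) (Fin.is_le k) hb
      (hmem τ hτI) (hmem τ hτI) (hmem t htI)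
    rw [h0, sub_zero, abs_of_nonneg hstτ] at hlip
    have h1 : s' τ * |hfun (n:ℕ) (k:ℕ) (s τ) (s t)| ≤ s' τ * (C3 * (s t - s τ)) :=
      mul_le_mul_of_nonneg_left hlip (hs'pos τ hτI)
    refine h1.trans ?_
    calc s' τ * (C3 * (s t - s τ)) = C3 * (s' τ * (s t - s τ)) := by ring
      _ ≤ c₀ * (s' τ * (s t - s τ)) :=
          mul_le_mul_of_nonneg_right hC3le (mul_nonneg (hs'pos τ hτI) hstτ)
      _ = c₀ * s' τ * (s t - s τ) := by ring
  · -- (vi)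
    filter_upwards [ae_restrict_mem measurableSet_Ioo] with τ hτT
    filter_upwards [ae_restrict_mem measurableSet_Ioo] with t ht
    intro n k
    have hτI : τ ∈ Set.Icc (0:ℝ) T := ⟨hτT.1.le, hτT.2.le⟩
    have htT : t ∈ Set.Ioo (0:ℝ) T := ⟨lt_trans hτT.1 ht.1, ht.2⟩
    have htI : t ∈ Set.Icc (0:ℝ) T := ⟨htT.1.le, htT.2.le⟩
    have hd := hsder τ hτT
    have hdt := hsder t htT
    have hder_phi : ∀ x : ℝ, deriv (fun r => phi s (n:ℕ) x r) τ = dpsi (n:ℕ) x (s τ) * s' τ :=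
      fun x => (((hasDerivAt_psi (n:ℕ) x (hspos τ hτI)).comp τ hd)).deriv
    have hDent : ∀ r ∈ Set.Icc (0:ℝ) T,
        Dtil s m τ r n k = s' τ * hfun (n:ℕ) (k:ℕ) (s τ) (s r) := by
      intro r hrI
      have hdef : Dtil s m τ r n k = ∫ x in (0:ℝ)..(s τ),
          deriv (fun x' => phi s (n:ℕ) x x') τ * (phi s (k:ℕ) x r - phi s (k:ℕ) x τ) := rfl
      rw [hdef]
      have hcongr : ∀ x ∈ Set.uIcc (0:ℝ) (s τ),
          deriv (fun x' => phi s (n:ℕ) x x') τ * (phi s (k:ℕ) x r - phi s (k:ℕ) x τ)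
          = s' τ * (dpsi (n:ℕ) x (s τ) * (psi (k:ℕ) x (s r) - psi (k:ℕ) x (s τ))) := by
        intro x _
        rw [hder_phi x]
        show dpsi (n:ℕ) x (s τ) * s' τ * (psi (k:ℕ) x (s r) - psi (k:ℕ) x (s τ)) = _
        ring
      rw [intervalIntegral.integral_congr hcongr, intervalIntegral.integral_const_mul,
        Hform (n:ℕ) (k:ℕ) (hspos τ hτI) (hspos r hrI)]
    have hcomp := (((hasDerivAt_hfun_A (n:ℕ) (k:ℕ) (hspos τ hτI) (hspos t htI)).comp
      t hdt).const_mul (s' τ))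
    have heq : (fun r => Dtil s m τ r n k)
        =ᶠ[𝓝 t] (fun r => s' τ * ((fun A' => hfun (n:ℕ) (k:ℕ) (s τ) A') ∘ s) r) := by
      filter_upwards [isOpen_Ioo.mem_nhds htT] with r hr
      exact hDent r ⟨hr.1.le, hr.2.le⟩
    rw [heq.deriv_eq, hcomp.deriv, abs_mul, abs_mul, abs_of_nonneg (hs'pos τ hτI),
      abs_of_nonneg (hs'pos t htI)]
    have habs := (abs_dhA_le m (n:ℕ) (k:ℕ) (Fin.is_le n) (Fin.is_le k) hb
      (hmem τ hτI) (hmem t htI)).trans hC3le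
    calc s' τ * (|dhA (n:ℕ) (k:ℕ) (s τ) (s t)| * s' t)
        = |dhA (n:ℕ) (k:ℕ) (s τ) (s t)| * (s' τ * s' t) := by ring
      _ ≤ c₀ * (s' τ * s' t) :=
          mul_le_mul_of_nonneg_right habs (mul_nonneg (hs'pos τ hτI) (hs'pos t htI))
      _ = c₀ * s' τ * s' t := by ring
  · -- (vii)
    filter_upwards [ae_restrict_mem measurableSet_Ioo] with t htT
    intro n k
    have htI : t ∈ Set.Icc (0:ℝ) T := ⟨htT.1.le, htT.2.le⟩
    have hΓ : 0 < Real.Gamma (1-α) := Real.Gamma_pos_of_pos (by linarith)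
    by_cases hnk : n = k
    · subst hnk
      have hfeq : (fun r => Emat α s m r n n)
          = fun r => (Real.pi * (s r)⁻¹ * ((n:ℝ)+1/2))^2 / Real.Gamma (1-α) := by
        funext r
        simp [Emat, lam, div_eq_mul_inv]
      have hd := hsder t htT
      have hst := hspos t htI
      have h1 := hd.inv hst.ne'
      have h2 := (h1.const_mul Real.pi).mul_const ((n:ℝ)+1/2)
      have h3 := h2.pow 2
      have h4 := h3.div_const (Real.Gamma (1-α))
      have h4' : HasDerivAt (fun r => (Real.pi * (s r)⁻¹ * ((n:ℝ)+1/2))^2 / Real.Gamma (1-α))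
          ((2:ℕ) * (Real.pi * (s t)⁻¹ * ((n:ℝ)+1/2)) ^ (2-1)
            * (Real.pi * (-(s' t) / s t ^ 2) * ((n:ℝ)+1/2)) / Real.Gamma (1-α)) t := h4
      rw [hfeq, h4'.deriv]
      have hDeq : (2:ℕ) * (Real.pi * (s t)⁻¹ * ((n:ℝ)+1/2)) ^ (2-1)
            * (Real.pi * (-(s' t) / s t ^ 2) * ((n:ℝ)+1/2)) / Real.Gamma (1-α)
          = -(2 * muu (n:ℕ) ^2 / ((s t)^3 * Real.Gamma (1-α)) * s' t) := by
        have hst' := hst.ne'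
        unfold muu
        field_simp
        have e : s t * (s t)⁻¹ = 1 := mul_inv_cancel₀ hst'
        linear_combination (-(Real.pi * (n:ℝ) * s' t * 2) - Real.pi * s' t) * e
      rw [hDeq, abs_neg, abs_of_nonneg (by
        have := (muu_pos (n:ℕ)).le
        have := hs'pos t htI
        have h3pos : 0 < (s t)^3 * Real.Gamma (1-α) := by positivity
        positivity)]
      have hle : 2 * muu (n:ℕ) ^2 / ((s t)^3 * Real.Gamma (1-α)) * s' t ≤ C4 * s' t := by
        rw [hC4def]
        refine mul_le_mul_of_nonneg_right ?_ (hs'pos t htI)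
        gcongr <;> first
          | exact mul_pos (by positivity) hΓ
          | exact (muu_pos (n:ℕ)).le
          | exact muu_le (Fin.is_le n)
          | exact pow_le_pow_left hb.le (hsb t htI) 3
          | exact hsb t htI
          | positivity
      exact hle.trans (mul_le_mul_of_nonneg_right hC4le (hs'pos t htI))
    · have hfeq : (fun r => Emat α s m r n k) = fun _ => (0:ℝ) := by
        funext r
        simp only [Emat, Matrix.of_apply, if_neg hnk]
      rw [hfeq, deriv_const, abs_zero]
      exact mul_nonneg hc₀pos.le (hs'pos t htI)
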